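/- Let Ω ⊆ ℝ^d be a domain with boundary Γ, let A be a bounded nonempty subset of Γ, let s ∈ (0,d) and suppose there is c > 0 such that |A_t| ≤ c·t^{d−s} for all t ∈ (0,1]. Let δ be a real number with 2 + s − d ≤ δ < 2. Then there exists c' > 0 such that for every r ∈ (0,1] and every integer n ≥ 2 one has ∫_Ω 1_{{x : r/n ≤ d_A(x) ≤ r}}·d_A(x)^{−(2−δ)} dx ≤ c'·(1 + (2−δ)·log n). -/

import Mathlib

open MeasureTheory Metric Set Filter
open scoped ENNReal NNReal Topology

noncomputable section

/-- Euclidean space ℝ^d. -/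
abbrev Euc (d : ℕ) : Type := EuclideanSpace ℝ (Fin d)


/-- The inner `t`-neighbourhood `A_t = {x ∈ closure Ω : d_A(x) < t}`. -/
def innNbhd (d : ℕ) (Ω A : Set (Euc d)) (t : ℝ) : Set (Euc d) :=
  {x ∈ closure Ω | infDist x A < t}

lemma level_null {d : ℕ} (hd : 0 < d) (A : Set (Euc d)) (hA : A.Nonempty) {t : ℝ} (ht : 0 < t) :
    volume {x : Euc d | infDist x A = t} = 0 := by
  have hnt : Nontrivial (Euc d) := by
    refine Module.nontrivial_of_finrank_pos (R := ℝ) ?_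
    simp only [finrank_euclideanSpace, Fintype.card_fin]
    exact hd
  set L : Set (Euc d) := {x | infDist x A = t} with hLdef
  have hLm : MeasurableSet L :=
    (isClosed_eq (continuous_infDist_pt A) continuous_const).measurableSet
  by_contra h
  have hres : volume.restrict L ≠ 0 := by
    intro h0
    apply h
    rw [← Measure.restrict_apply_univ]
    simp [h0]
  haveI : (ae (volume.restrict L)).NeBot := ae_neBot.2 hres
  obtain ⟨x, hx_tendsto, hxL⟩ :=
    ((Besicovitch.ae_tendsto_measure_inter_div volume L).and (ae_restrict_mem hLm)).exists
  set κ : ℝ := 1 - (4 : ℝ)⁻¹ ^ d with hκdef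
  have hq0 : (0 : ℝ) < (4 : ℝ)⁻¹ ^ d := by positivity
  have hq1 : (4 : ℝ)⁻¹ ^ d ≤ 1 := by
    apply pow_le_one₀ <;> norm_num
  have key : ∀ ε : ℝ, 0 < ε → ε < t →
      volume (L ∩ closedBall x ε) / volume (closedBall x ε) ≤ ENNReal.ofReal κ := by
    intro ε hε0 hεt
    obtain ⟨a, haA, hxa⟩ := exists_mem_closure_infDist_eq_dist hA x
    have hxt : infDist x A = t := hxL
    have hdxa : dist x a = t := by rw [← hxa, hxt]
    set z : Euc d := x + (ε / (2 * t)) • (a - x) with hzdef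
    have hzx : dist z x = ε / 2 := by
      rw [dist_eq_norm]
      have : z - x = (ε / (2 * t)) • (a - x) := by rw [hzdef]; abel
      rw [this, norm_smul]
      have hax : ‖a - x‖ = t := by rw [← dist_eq_norm, dist_comm]; exact hdxa
      rw [hax, Real.norm_eq_abs, abs_of_pos (by positivity : (0:ℝ) < ε / (2*t))]
      field_simp
    have hza : dist z a = t - ε / 2 := by
      have hz_a : z - a = (1 - ε / (2 * t)) • (x - a) := by
        rw [hzdef]; module
      rw [dist_eq_norm, hz_a, norm_smul, Real.norm_eq_abs,
        abs_of_pos (by rw [sub_pos]; rw [div_lt_one (by positivity)]; linarith),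
        ← dist_eq_norm, hdxa]
      field_simp
    have hzA : infDist z A ≤ t - ε / 2 := by
      rw [← infDist_closure]
      exact (infDist_le_dist_of_mem haA).trans hza.le
    have hball_sub : ball z (ε / 4) ⊆ closedBall x ε := by
      intro y hy
      rw [mem_ball] at hy
      rw [mem_closedBall]
      have := dist_triangle y z x
      linarith
    have hball_L : ∀ y ∈ ball z (ε / 4), y ∉ L := by
      intro y hy hyL
      have h1 : infDist y A ≤ infDist z A + dist y z := infDist_le_infDist_add_dist
      rw [mem_ball] at hy
      have hyt : infDist y A = t := hyL
      linarith
    have hsub : L ∩ closedBall x ε ⊆ closedBall x ε \ ball z (ε / 4) := by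
      rintro y ⟨hy1, hy2⟩
      exact ⟨hy2, fun hin => hball_L y hin hy1⟩
    have hfinr : Module.finrank ℝ (Euc d) = d := finrank_euclideanSpace_fin
    have hμball : volume (ball z (ε / 4)) =
        ENNReal.ofReal ((4 : ℝ)⁻¹ ^ d) * volume (closedBall x ε) := by
      rw [Measure.addHaar_ball volume z (by positivity : (0:ℝ) ≤ ε / 4),
        Measure.addHaar_closedBall volume x hε0.le, ← mul_assoc,
        ← ENNReal.ofReal_mul (by positivity), hfinr]
      congr 2
      rw [div_pow, ← mul_pow]
      congr 1
      ring
      norm_num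
    have hfin : volume (closedBall x ε) ≠ ⊤ := measure_closedBall_lt_top.ne
    have h0 : volume (closedBall x ε) ≠ 0 := (measure_closedBall_pos volume x hε0).ne'
    have hmain : volume (L ∩ closedBall x ε) ≤ ENNReal.ofReal κ * volume (closedBall x ε) := by
      calc volume (L ∩ closedBall x ε) ≤ volume (closedBall x ε \ ball z (ε / 4)) :=
            measure_mono hsub
        _ = volume (closedBall x ε) - volume (ball z (ε / 4)) :=
            measure_diff hball_sub measurableSet_ball.nullMeasurableSet measure_ball_lt_top.ne
        _ = (1 - ENNReal.ofReal ((4 : ℝ)⁻¹ ^ d)) * volume (closedBall x ε) := by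
            rw [hμball, ENNReal.sub_mul (fun _ _ => hfin), one_mul]
        _ = ENNReal.ofReal κ * volume (closedBall x ε) := by
            rw [hκdef, ENNReal.ofReal_sub _ (by positivity), ENNReal.ofReal_one]
    exact ENNReal.div_le_of_le_mul hmain
  have hev : ∀ᶠ ε in 𝓝[>] (0 : ℝ),
      volume (L ∩ closedBall x ε) / volume (closedBall x ε) ≤ ENNReal.ofReal κ := by
    filter_upwards [Ioo_mem_nhdsGT_of_mem ⟨le_refl 0, ht⟩] with ε hε using key ε hε.1 hε.2
  have hle : (1 : ℝ≥0∞) ≤ ENNReal.ofReal κ := le_of_tendsto hx_tendsto hev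
  have hlt : ENNReal.ofReal κ < 1 := by
    rw [ENNReal.ofReal_lt_one]
    rw [hκdef]; linarith
  exact absurd hle hlt.not_ge


lemma vol_le_aux {d : ℕ} (hd : 0 < d) {Ω A : Set (Euc d)} (hA : A.Nonempty) {c s : ℝ}
    (hvol : ∀ t : ℝ, 0 < t → t ≤ 1 →
      volume (innNbhd d Ω A t) ≤ ENNReal.ofReal (c * t ^ ((d : ℝ) - s)))
    {ρ : ℝ} (hρ0 : 0 < ρ) (hρ1 : ρ ≤ 1) :
    volume {x : Euc d | x ∈ closure Ω ∧ infDist x A ≤ ρ} ≤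
      ENNReal.ofReal (c * ρ ^ ((d : ℝ) - s)) := by
  have hsub : {x : Euc d | x ∈ closure Ω ∧ infDist x A ≤ ρ} ⊆
      innNbhd d Ω A ρ ∪ {x | infDist x A = ρ} := by
    rintro x ⟨hx1, hx2⟩
    rcases lt_or_eq_of_le hx2 with h | h
    · exact Or.inl ⟨hx1, h⟩
    · exact Or.inr h
  calc volume {x : Euc d | x ∈ closure Ω ∧ infDist x A ≤ ρ}
      ≤ volume (innNbhd d Ω A ρ) + volume {x : Euc d | infDist x A = ρ} :=
        (measure_mono hsub).trans (measure_union_le _ _)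
    _ = volume (innNbhd d Ω A ρ) := by rw [level_null hd A hA hρ0, add_zero]
    _ ≤ _ := hvol ρ hρ0 hρ1

/-- The key integral estimate in the proof of Proposition 3.1: if `|A_t| ≤ c·t^(d-s)`
for `t ∈ (0,1]` and `2 + s - d ≤ δ < 2`, then
`∫_Ω 1_{r/n ≤ d_A ≤ r} d_A^{-(2-δ)} ≤ c'·(1 + (2-δ)·log n)` for all `r ∈ (0,1]`, `n ≥ 2`. -/
theorem stmt_14 (d : ℕ) (Ω : Set (Euc d)) (hΩopen : IsOpen Ω) (hΩconn : IsConnected Ω)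
    (A : Set (Euc d)) (hAΓ : A ⊆ frontier Ω) (hAne : A.Nonempty)
    (hAbd : Bornology.IsBounded A)
    (s : ℝ) (hs0 : 0 < s) (hsd : s < d) (c : ℝ) (hc : 0 < c)
    (hvol : ∀ t : ℝ, 0 < t → t ≤ 1 →
      volume (innNbhd d Ω A t) ≤ ENNReal.ofReal (c * t ^ ((d : ℝ) - s)))
    (δ : ℝ) (hδ1 : 2 + s - d ≤ δ) (hδ2 : δ < 2) :
    ∃ c' > (0 : ℝ), ∀ r : ℝ, 0 < r → r ≤ 1 → ∀ n : ℕ, 2 ≤ n →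
      ∫⁻ x in Ω, ENNReal.ofReal
          ({y : Euc d | r / n ≤ infDist y A ∧ infDist y A ≤ r}.indicator
            (fun y => infDist y A ^ (-(2 - δ))) x) ≤
        ENNReal.ofReal (c' * (1 + (2 - δ) * Real.log n)) := by
  classical
  have hd0 : 0 < d := by
    have : (0 : ℝ) < (d : ℝ) := lt_trans hs0 hsd
    exact_mod_cast this
  set α : ℝ := 2 - δ with hαdef
  have hα0 : 0 < α := by simp only [hαdef]; linarith
  have hαd : α ≤ (d : ℝ) - s := by simp only [hαdef]; linarith
  set C₀ : ℝ := c * 2 ^ d with hC₀def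
  have hC₀ : 0 < C₀ := by positivity
  refine ⟨4 * C₀ * max 1 α⁻¹, by positivity, ?_⟩
  intro r hr0 hr1 n hn
  set K : ℕ := Nat.clog 2 n with hKdef
  set T : ℕ → Set (Euc d) := fun k => {x : Euc d | infDist x A ≤ r / 2 ^ k} with hTdef
  set M : ℕ → ℝ≥0∞ := fun k => ENNReal.ofReal ((r / 2 ^ (k + 1)) ^ (-α)) with hMdef
  have hTm : ∀ k : ℕ, MeasurableSet (T k) := fun k =>
    (isClosed_le (continuous_infDist_pt A) continuous_const).measurableSet
  -- pointwise bound
  have hpt : ∀ x : Euc d,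
      ENNReal.ofReal ({y : Euc d | r / n ≤ infDist y A ∧ infDist y A ≤ r}.indicator
        (fun y => infDist y A ^ (-α)) x) ≤
      ∑ k ∈ Finset.range (K + 1), (T k).indicator (fun _ => M k) x := by
    intro x
    by_cases hx : x ∈ {y : Euc d | r / n ≤ infDist y A ∧ infDist y A ≤ r}
    · have hn2K : (n : ℝ) ≤ 2 ^ (K + 1) := by
        have h1 : n ≤ 2 ^ K := Nat.le_pow_clog one_lt_two n
        have h2 : (n : ℝ) ≤ (2 : ℝ) ^ K := by exact_mod_cast h1
        have h3 : (2 : ℝ) ^ K ≤ 2 ^ (K + 1) := by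
          apply pow_le_pow_right₀ (by norm_num) (Nat.le_succ K)
        linarith
      have hdx0 : 0 < infDist x A :=
        lt_of_lt_of_le (div_pos hr0 (by exact_mod_cast (by omega : 0 < n))) hx.1
      have hex : ∃ j : ℕ, r / 2 ^ (j + 1) ≤ infDist x A := by
        refine ⟨K, le_trans ?_ hx.1⟩
        apply div_le_div_of_nonneg_left hr0.le
        · exact_mod_cast (by omega : 0 < n)
        · exact hn2K
      set k : ℕ := Nat.find hex with hkdef
      have hkK : k ≤ K := Nat.find_le (by
        refine le_trans ?_ hx.1
        apply div_le_div_of_nonneg_left hr0.le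
        · exact_mod_cast (by omega : 0 < n)
        · exact hn2K)
      have hlow : r / 2 ^ (k + 1) ≤ infDist x A := Nat.find_spec hex
      have hupp : infDist x A ≤ r / 2 ^ k := by
        rcases Nat.eq_zero_or_pos k with h0 | hpos
        · rw [h0]; simpa using hx.2
        · have hmin := Nat.find_min hex (Nat.sub_lt hpos one_pos)
          rw [← hkdef] at hmin
          have : k - 1 + 1 = k := Nat.succ_pred_eq_of_pos hpos
          rw [this] at hmin
          push_neg at hmin
          exact hmin.le
      have hmemT : x ∈ T k := hupp
      rw [Set.indicator_of_mem hx]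
      calc ENNReal.ofReal (infDist x A ^ (-α)) ≤ M k := by
            apply ENNReal.ofReal_le_ofReal
            exact Real.rpow_le_rpow_of_nonpos (by positivity) hlow (neg_nonpos.2 hα0.le)
        _ = (T k).indicator (fun _ => M k) x := (Set.indicator_of_mem hmemT (fun _ => M k)).symm
        _ ≤ ∑ j ∈ Finset.range (K + 1), (T j).indicator (fun _ => M j) x :=
            Finset.single_le_sum (f := fun j => (T j).indicator (fun _ => M j) x)
              (fun i _ => zero_le) (Finset.mem_range.2 (Nat.lt_succ_of_le hkK))
    · rw [Set.indicator_of_notMem hx]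
      simp
  -- per-annulus bound
  have hterm : ∀ k : ℕ, (r / 2 ^ (k + 1)) ^ (-α) * (c * (r / 2 ^ k) ^ ((d : ℝ) - s)) ≤ C₀ := by
    intro k
    set u : ℝ := r / 2 ^ (k + 1) with hudef
    have hu0 : 0 < u := by positivity
    have h2u : r / 2 ^ k = 2 * u := by
      rw [hudef]; field_simp; ring
    have h2u1 : 2 * u ≤ 1 := by
      rw [← h2u]
      rw [div_le_one (by positivity)]
      have : (1 : ℝ) ≤ 2 ^ k := one_le_pow₀ (by norm_num)
      linarith
    have hu1 : u ≤ 1 := by linarith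
    rw [h2u]
    have hsplit : (2 * u) ^ ((d : ℝ) - s) = 2 ^ ((d : ℝ) - s) * u ^ ((d : ℝ) - s) :=
      Real.mul_rpow (by norm_num) hu0.le
    rw [hsplit]
    have hcomb : u ^ (-α) * u ^ ((d : ℝ) - s) = u ^ ((d : ℝ) - s - α) := by
      rw [← Real.rpow_add hu0]; ring_nf
    have h1 : u ^ ((d : ℝ) - s - α) ≤ 1 :=
      Real.rpow_le_one hu0.le hu1 (by linarith)
    have h2 : (2 : ℝ) ^ ((d : ℝ) - s) ≤ 2 ^ (d : ℕ) := by
      rw [← Real.rpow_natCast 2 d]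
      exact Real.rpow_le_rpow_of_exponent_le (by norm_num) (by linarith)
    have hrw : u ^ (-α) * (c * (2 ^ ((d : ℝ) - s) * u ^ ((d : ℝ) - s))) =
        c * 2 ^ ((d : ℝ) - s) * (u ^ (-α) * u ^ ((d : ℝ) - s)) := by ring
    rw [hrw, hcomb]
    calc c * 2 ^ ((d : ℝ) - s) * u ^ ((d : ℝ) - s - α)
        ≤ c * 2 ^ ((d : ℝ) - s) * 1 := by
          apply mul_le_mul_of_nonneg_left h1 (by positivity)
      _ = c * 2 ^ ((d : ℝ) - s) := mul_one _
      _ ≤ C₀ := by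
          rw [hC₀def]
          exact mul_le_mul_of_nonneg_left h2 hc.le
  have hterm2 : ∀ k ∈ Finset.range (K + 1),
      (∫⁻ x in Ω, (T k).indicator (fun _ => M k) x) ≤ ENNReal.ofReal C₀ := by
    intro k _
    rw [lintegral_indicator (hTm k), setLIntegral_const, Measure.restrict_apply (hTm k)]
    have hb0 : 0 < r / 2 ^ k := by positivity
    have hb1 : r / 2 ^ k ≤ 1 := by
      rw [div_le_one (by positivity)]
      have : (1 : ℝ) ≤ 2 ^ k := one_le_pow₀ (by norm_num)
      linarith
    have hsub2 : T k ∩ Ω ⊆ {x : Euc d | x ∈ closure Ω ∧ infDist x A ≤ r / 2 ^ k} :=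
      fun x hx => ⟨subset_closure hx.2, hx.1⟩
    calc M k * volume (T k ∩ Ω)
        ≤ M k * ENNReal.ofReal (c * (r / 2 ^ k) ^ ((d : ℝ) - s)) :=
          mul_le_mul_right ((measure_mono hsub2).trans (vol_le_aux hd0 hAne hvol hb0 hb1)) _
      _ = ENNReal.ofReal ((r / 2 ^ (k + 1)) ^ (-α) * (c * (r / 2 ^ k) ^ ((d : ℝ) - s))) :=
          (ENNReal.ofReal_mul (Real.rpow_nonneg (by positivity) _)).symm
      _ ≤ ENNReal.ofReal C₀ := ENNReal.ofReal_le_ofReal (hterm k)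
  -- the K bound
  have hK1 : 1 ≤ K := Nat.clog_pos one_lt_two hn
  have hlogn : 0 ≤ Real.log n := Real.log_nonneg (by exact_mod_cast (by omega : 1 ≤ n))
  have hKle : (K : ℝ) ≤ 1 + 2 * Real.log n := by
    have h2 : (2 : ℕ) ^ (K - 1) < n := Nat.pow_pred_clog_lt_self one_lt_two (by omega)
    have h3 : ((2 : ℝ)) ^ (K - 1) ≤ (n : ℝ) := by exact_mod_cast h2.le
    have h4 : ((K : ℝ) - 1) * Real.log 2 ≤ Real.log n := by
      have := Real.log_le_log (by positivity) h3
      rw [Real.log_pow] at this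
      have hcast : ((K - 1 : ℕ) : ℝ) = (K : ℝ) - 1 := by
        push_cast [Nat.cast_sub hK1]; ring
      rw [hcast] at this
      exact this
    have hl2 : (0.6931471803 : ℝ) < Real.log 2 := Real.log_two_gt_d9
    nlinarith
  -- put everything together
  calc ∫⁻ x in Ω, ENNReal.ofReal
        ({y : Euc d | r / n ≤ infDist y A ∧ infDist y A ≤ r}.indicator
          (fun y => infDist y A ^ (-α)) x)
      ≤ ∫⁻ x in Ω, ∑ k ∈ Finset.range (K + 1), (T k).indicator (fun _ => M k) x :=
        lintegral_mono hpt
    _ = ∑ k ∈ Finset.range (K + 1), ∫⁻ x in Ω, (T k).indicator (fun _ => M k) x :=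
        lintegral_finset_sum _ (fun k _ => measurable_const.indicator (hTm k))
    _ ≤ ∑ k ∈ Finset.range (K + 1), ENNReal.ofReal C₀ := Finset.sum_le_sum hterm2
    _ = ((K + 1 : ℕ) : ℝ≥0∞) * ENNReal.ofReal C₀ := by
        rw [Finset.sum_const, Finset.card_range, nsmul_eq_mul]
    _ ≤ ENNReal.ofReal (4 * C₀ * max 1 α⁻¹ * (1 + α * Real.log n)) := by
        have hcast : ((K + 1 : ℕ) : ℝ≥0∞) = ENNReal.ofReal ((K : ℝ) + 1) := by
          rw [← ENNReal.ofReal_natCast]; congr 1; push_cast; ring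
        rw [hcast, ← ENNReal.ofReal_mul (by positivity)]
        apply ENNReal.ofReal_le_ofReal
        have hM1 : (1 : ℝ) ≤ max 1 α⁻¹ := le_max_left _ _
        have hMα : (1 : ℝ) ≤ max 1 α⁻¹ * α := by
          calc (1 : ℝ) = α⁻¹ * α := (inv_mul_cancel₀ hα0.ne').symm
            _ ≤ max 1 α⁻¹ * α := mul_le_mul_of_nonneg_right (le_max_right _ _) hα0.le
        nlinarith [mul_le_mul_of_nonneg_right hMα hlogn]
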